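/- Let R₀ > 0 and 0 ≤ φₛ < 1. The set S = {v ∈ ℝ² : ‖v‖² ≤ R₀(‖v‖ + φₛ·v₁)} (whose boundary is the limaçon fire front r = R₀(1 + φₛ cos θ) in polar coordinates) is convex if and only if φₛ ≤ 1/2. -/

import Mathlib

private lemma abs_fst_le_norm (v : EuclideanSpace ℝ (Fin 2)) : |v 0| ≤ ‖v‖ := by
  rw [EuclideanSpace.norm_eq]
  have h : |v 0| = Real.sqrt (‖v 0‖ ^ 2) := by
    rw [Real.norm_eq_abs, Real.sqrt_sq (abs_nonneg _)]
  rw [h]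
  apply Real.sqrt_le_sqrt
  rw [Fin.sum_univ_two]
  nlinarith [sq_nonneg (‖v 1‖)]

set_option maxHeartbeats 1600000 in
/-- For `R₀ > 0` and `0 ≤ φₛ < 1`, the sublevel set
`S = {v ∈ ℝ² : ‖v‖² ≤ R₀ (‖v‖ + φₛ v₁)}` of the Matsumoto-type slope metric
(whose boundary is the limaçon fire front `r = R₀(1 + φₛ cos θ)`) is convex
if and only if `φₛ ≤ 1/2`. -/
theorem fireFront_sublevel_convex_iff (R₀ φₛ : ℝ) (hR₀ : 0 < R₀)
    (hφ₀ : 0 ≤ φₛ) (hφ₁ : φₛ < 1) :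
    Convex ℝ {v : EuclideanSpace ℝ (Fin 2) | ‖v‖ ^ 2 ≤ R₀ * (‖v‖ + φₛ * v 0)} ↔
      φₛ ≤ 1 / 2 := by
  constructor
  · -- convex → φₛ ≤ 1/2, by contraposition
    intro hconv
    by_contra hφ
    push_neg at hφ
    have hφpos : 0 < φₛ := lt_trans one_half_pos hφ
    obtain ⟨t, htdef⟩ : ∃ t : ℝ, t = 1 / (2 * φₛ) := ⟨_, rfl⟩
    have hφt : φₛ * t = 1 / 2 := by rw [htdef]; field_simp
    have ht0 : 0 < t := by rw [htdef]; positivity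
    have ht1 : t < 1 := by
      rw [htdef, div_lt_one (by positivity)]; linarith
    obtain ⟨y, hydef⟩ : ∃ y : ℝ, y = Real.sqrt (1 - t ^ 2) := ⟨_, rfl⟩
    have hy0 : 0 ≤ y := hydef ▸ Real.sqrt_nonneg _
    have hy2 : y ^ 2 = 1 - t ^ 2 := hydef ▸ Real.sq_sqrt (by nlinarith)
    obtain ⟨p, hpdef⟩ : ∃ p : EuclideanSpace ℝ (Fin 2), p = !₂[-(R₀ * t) / 2, R₀ * y / 2] :=
      ⟨_, rfl⟩
    obtain ⟨q, hqdef⟩ : ∃ q : EuclideanSpace ℝ (Fin 2), q = !₂[-(R₀ * t) / 2, -(R₀ * y / 2)] :=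
      ⟨_, rfl⟩
    have hp0 : p 0 = -(R₀ * t) / 2 := by rw [hpdef]; rfl
    have hq0 : q 0 = -(R₀ * t) / 2 := by rw [hqdef]; rfl
    have hpn : ‖p‖ = R₀ / 2 := by
      have h1 : ‖p‖ = Real.sqrt ((-(R₀ * t) / 2) ^ 2 + (R₀ * y / 2) ^ 2) := by
        rw [EuclideanSpace.norm_eq, Fin.sum_univ_two]
        simp only [hpdef, Real.norm_eq_abs, sq_abs, Matrix.cons_val_zero, Matrix.cons_val_one,
          Matrix.head_cons]
      rw [h1, show (-(R₀ * t) / 2) ^ 2 + (R₀ * y / 2) ^ 2 = (R₀ / 2) ^ 2 by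
        nlinarith [hy2]]
      exact Real.sqrt_sq (by positivity)
    have hqn : ‖q‖ = R₀ / 2 := by
      have h1 : ‖q‖ = Real.sqrt ((-(R₀ * t) / 2) ^ 2 + (-(R₀ * y / 2)) ^ 2) := by
        rw [EuclideanSpace.norm_eq, Fin.sum_univ_two]
        simp only [hqdef, Real.norm_eq_abs, sq_abs, Matrix.cons_val_zero, Matrix.cons_val_one,
          Matrix.head_cons]
      rw [h1, show (-(R₀ * t) / 2) ^ 2 + (-(R₀ * y / 2)) ^ 2 = (R₀ / 2) ^ 2 by
        nlinarith [hy2]]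
      exact Real.sqrt_sq (by positivity)
    have hpS : p ∈ {v : EuclideanSpace ℝ (Fin 2) | ‖v‖ ^ 2 ≤ R₀ * (‖v‖ + φₛ * v 0)} := by
      simp only [Set.mem_setOf_eq, hpn, hp0]
      nlinarith [hφt]
    have hqS : q ∈ {v : EuclideanSpace ℝ (Fin 2) | ‖v‖ ^ 2 ≤ R₀ * (‖v‖ + φₛ * v 0)} := by
      simp only [Set.mem_setOf_eq, hqn, hq0]
      nlinarith [hφt]
    have hmem := hconv hpS hqS (by norm_num : (0:ℝ) ≤ 1/2) (by norm_num : (0:ℝ) ≤ 1/2)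
      (by norm_num)
    obtain ⟨m, hmdef⟩ : ∃ m : EuclideanSpace ℝ (Fin 2), m = (1/2 : ℝ) • p + (1/2 : ℝ) • q :=
      ⟨_, rfl⟩
    rw [← hmdef] at hmem
    have hm0 : m 0 = -(R₀ * t) / 2 := by
      simp only [hmdef, PiLp.add_apply, PiLp.smul_apply, smul_eq_mul, hp0, hq0]
      ring
    have hm1 : m 1 = 0 := by
      have hp1 : p 1 = R₀ * y / 2 := by rw [hpdef]; rfl
      have hq1 : q 1 = -(R₀ * y / 2) := by rw [hqdef]; rfl
      simp only [hmdef, PiLp.add_apply, PiLp.smul_apply, smul_eq_mul, hp1, hq1]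
      ring
    have hmn : ‖m‖ = R₀ * t / 2 := by
      have h1 : ‖m‖ = Real.sqrt (‖m 0‖ ^ 2 + ‖m 1‖ ^ 2) := by
        rw [EuclideanSpace.norm_eq, Fin.sum_univ_two]
      rw [h1, hm0, hm1]
      rw [show ‖-(R₀ * t) / 2‖ ^ 2 + ‖(0:ℝ)‖ ^ 2 = (R₀ * t / 2) ^ 2 by
        simp only [Real.norm_eq_abs, sq_abs, norm_zero]
        ring]
      exact Real.sqrt_sq (by positivity)
    have hm : ‖m‖ ^ 2 ≤ R₀ * (‖m‖ + φₛ * m 0) := hmem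
    rw [hmn, hm0] at hm
    -- (R₀ t/2)² ≤ R₀ (R₀ t/2)(1-φₛ)  ⇒  t ≤ 2(1-φₛ)  ⇒  (2φₛ-1)² ≤ 0, contradiction
    have ht2 : t ≤ 2 * (1 - φₛ) := by
      have hpos : 0 < R₀ * t / 2 := by positivity
      nlinarith [hm, mul_pos (mul_pos hR₀ hR₀) ht0]
    rw [htdef] at ht2
    rw [div_le_iff₀ (by positivity)] at ht2
    nlinarith [sq_nonneg (2 * φₛ - 1)]
  · -- φₛ ≤ 1/2 → convex
    intro hφ p hp q hq a b ha hb hab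
    simp only [Set.mem_setOf_eq] at hp hq ⊢
    set m : EuclideanSpace ℝ (Fin 2) := a • p + b • q with hmdef
    set A := ‖p‖ with hA
    set B := ‖q‖ with hB
    set C := ‖m‖ with hC
    have hA0 : 0 ≤ A := norm_nonneg _
    have hB0 : 0 ≤ B := norm_nonneg _
    have hC0 : 0 ≤ C := norm_nonneg _
    have hm0 : m 0 = a * p 0 + b * q 0 := by
      simp [hmdef, PiLp.add_apply, PiLp.smul_apply, smul_eq_mul]
    have habs : |m 0| ≤ C := abs_fst_le_norm m
    have hlow : -C ≤ m 0 := neg_le_of_abs_le habs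
    have hXA : |p 0| ≤ A := abs_fst_le_norm p
    have hUB : |q 0| ≤ B := abs_fst_le_norm q
    have htri : C ≤ a * A + b * B := by
      calc C ≤ ‖a • p‖ + ‖b • q‖ := norm_add_le _ _
        _ = a * A + b * B := by
            rw [norm_smul, norm_smul, Real.norm_eq_abs, Real.norm_eq_abs,
              abs_of_nonneg ha, abs_of_nonneg hb]
    rcases le_or_gt C (R₀ * (1 - φₛ)) with hcase | hcase
    · -- small case: C ≤ R₀(1-φₛ); then C² ≤ R₀ C - R₀ φ C ≤ R₀(C + φ m₀)
      nlinarith [mul_le_mul_of_nonneg_left hcase hC0,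
        mul_le_mul_of_nonneg_left hlow (mul_nonneg hR₀.le hφ₀)]
    · -- large case: C > R₀(1-φₛ) ≥ R₀/2
      have hs : C ≤ a * A + b * B := htri
      have hsum : R₀ ≤ (a * A + b * B) + C := by nlinarith
      have key1 : 0 ≤ (a * A + b * B - C) * ((a * A + b * B) + C - R₀) :=
        mul_nonneg (by linarith) (by linarith)
      have key2 : (a * A + b * B) ^ 2 ≤ a * A ^ 2 + b * B ^ 2 := by
        nlinarith [mul_nonneg (mul_nonneg ha hb) (sq_nonneg (A - B))]
      have hmulA : a * A ^ 2 ≤ a * (R₀ * (A + φₛ * p 0)) :=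
        mul_le_mul_of_nonneg_left hp ha
      have hmulB : b * B ^ 2 ≤ b * (R₀ * (B + φₛ * q 0)) :=
        mul_le_mul_of_nonneg_left hq hb
      -- C² - R₀ C ≤ s² - R₀ s ≤ (aA² + bB²) - R₀ s ≤ R₀ φ (a p₀ + b q₀)
      rw [hm0]
      nlinarith [key1, key2, hmulA, hmulB]
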